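/- Let a : ℕ → ℝ and define the reward ρ_t for t ≥ 1 by ρ_t = 0 if a_t ≤ max_{s<t} a_s and ρ_t = −a_t² + (max_{s<t} a_s)² otherwise, and let P_t = ∑_{s=1}^{t} ρ_s be the cumulative reward. Assume a_t ≥ 0 for all t. Then P_t = a_0² − (max_{0 ≤ s ≤ t} a_s)² for every t ≥ 1, the sequence (P_t) is nonincreasing, and for every horizon T ≥ 1, P attains its minimum over {1,…,T} exactly at those times t for which max_{0 ≤ s ≤ t} a_s = max_{0 ≤ s ≤ T} a_s; in particular the first minimizer of the cumulative reward coincides with the first time the running maximum of a attains its global maximum over {0,…,T} (when that time is ≥ 1). -/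

import Mathlib

/-- For a nonnegative trajectory `a` and the reward `ρ` built from its
running maximum, the cumulative reward `P_t = ∑_{s=1}^t ρ_s` satisfies
`P_t = a_0² − (max_{0 ≤ s ≤ t} a_s)²` for `t ≥ 1`, is nonincreasing, and for every
horizon `T ≥ 1` its minimizers over `{1,…,T}` are exactly the times at which the running
maximum of `a` attains its value over `{0,…,T}`; in particular the first minimizer of `P`
coincides with the first time the running maximum attains its global maximum over
`{0,…,T}` (when that time is `≥ 1`). -/
theorem reward_cumulative_min_at_peak (a : ℕ → ℝ) (ha : ∀ t, 0 ≤ a t) (ρ P : ℕ → ℝ)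
    (hρ : ∀ t : ℕ, ρ (t + 1) =
      if a (t + 1) ≤ (Finset.range (t + 1)).sup' Finset.nonempty_range_add_one a then 0
      else -(a (t + 1)) ^ 2 + ((Finset.range (t + 1)).sup' Finset.nonempty_range_add_one a) ^ 2)
    (hP : ∀ t : ℕ, P t = ∑ s ∈ Finset.Icc 1 t, ρ s) :
    (∀ t : ℕ, 1 ≤ t →
      P t = (a 0) ^ 2 - ((Finset.range (t + 1)).sup' Finset.nonempty_range_add_one a) ^ 2) ∧
    Antitone P ∧
    (∀ T : ℕ, 1 ≤ T → ∀ t : ℕ, 1 ≤ t → t ≤ T →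
      ((∀ s : ℕ, 1 ≤ s → s ≤ T → P t ≤ P s) ↔
        (Finset.range (t + 1)).sup' Finset.nonempty_range_add_one a
          = (Finset.range (T + 1)).sup' Finset.nonempty_range_add_one a)) ∧
    (∀ T : ℕ, 1 ≤ T →
      1 ≤ sInf {t : ℕ | t ≤ T ∧
          (Finset.range (t + 1)).sup' Finset.nonempty_range_add_one a
            = (Finset.range (T + 1)).sup' Finset.nonempty_range_add_one a} →
      sInf {t : ℕ | 1 ≤ t ∧ t ≤ T ∧ ∀ s : ℕ, 1 ≤ s → s ≤ T → P t ≤ P s}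
        = sInf {t : ℕ | t ≤ T ∧
            (Finset.range (t + 1)).sup' Finset.nonempty_range_add_one a
              = (Finset.range (T + 1)).sup' Finset.nonempty_range_add_one a}) := by

  have hMdef : ∀ t : ℕ, (Finset.range (t + 1)).sup' Finset.nonempty_range_add_one a
      = (fun t => (Finset.range (t + 1)).sup' Finset.nonempty_range_add_one a) t := fun t => rfl
  set M : ℕ → ℝ := fun t => (Finset.range (t + 1)).sup' Finset.nonempty_range_add_one a with hM
  have hMsucc : ∀ t, M (t + 1) = max (a (t + 1)) (M t) := by
    intro t
    show (Finset.range (t + 2)).sup' Finset.nonempty_range_add_one a = _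
    apply le_antisymm
    · apply Finset.sup'_le
      intro i hi
      simp only [Finset.mem_range] at hi
      rcases Nat.lt_succ_iff_lt_or_eq.mp hi with h | h
      · exact le_max_of_le_right (Finset.le_sup' a (Finset.mem_range.mpr h))
      · subst h; exact le_max_left _ _
    · apply max_le
      · exact Finset.le_sup' a (Finset.mem_range.mpr (by omega))
      · apply Finset.sup'_le
        intro i hi
        simp only [Finset.mem_range] at hi
        exact Finset.le_sup' a (Finset.mem_range.mpr (by omega))
  have hMmono : Monotone M := by
    intro s t hst
    apply Finset.sup'_le
    intro i hi
    apply Finset.le_sup'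
    simp only [Finset.mem_range] at hi ⊢
    omega
  have hM0 : ∀ t, 0 ≤ M t := fun t =>
    le_trans (ha 0) (Finset.le_sup' a (by simp))
  have hPM : ∀ t, P t = (a 0) ^ 2 - (M t) ^ 2 := by
    intro t
    induction t with
    | zero =>
      have : M 0 = a 0 := by
        show (Finset.range 1).sup' Finset.nonempty_range_add_one a = a 0
        simp
      rw [hP, this]
      simp
    | succ n ih =>
      have hstep : P (n + 1) = P n + ρ (n + 1) := by
        rw [hP, hP, Finset.sum_Icc_succ_top (by omega : 1 ≤ n + 1)]
      rw [hstep, ih, hρ n, hMdef n, hMsucc n]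
      by_cases h : a (n + 1) ≤ M n
      · rw [if_pos h, max_eq_right h]; ring
      · rw [if_neg h, max_eq_left (le_of_not_ge h)]; ring
  have part1 : ∀ t : ℕ, 1 ≤ t → P t = (a 0) ^ 2 - (M t) ^ 2 := fun t _ => hPM t
  have part2 : Antitone P := by
    intro s t hst
    rw [hPM, hPM]
    have h1 := hMmono hst
    nlinarith [hM0 s, hM0 t]
  have part3 : ∀ T : ℕ, 1 ≤ T → ∀ t : ℕ, 1 ≤ t → t ≤ T →
      ((∀ s : ℕ, 1 ≤ s → s ≤ T → P t ≤ P s) ↔ M t = M T) := by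
    intro T hT t ht htT
    constructor
    · intro h
      have hh := h T hT le_rfl
      rw [hPM, hPM] at hh
      have hle : M t ≤ M T := hMmono htT
      have : M T ≤ M t := by nlinarith [hM0 t, hM0 T]
      linarith
    · intro heq s hs hsT
      rw [hPM, hPM]
      have h1 : M s ≤ M t := heq ▸ hMmono hsT
      nlinarith [hM0 s, hM0 t]
  refine ⟨part1, part2, part3, ?_⟩
  intro T hT hinf
  have hTS2 : T ∈ {t : ℕ | t ≤ T ∧ M t = M T} := ⟨le_rfl, rfl⟩
  have hne2 : {t : ℕ | t ≤ T ∧ M t = M T}.Nonempty := ⟨T, hTS2⟩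
  have hn : sInf {t : ℕ | t ≤ T ∧ M t = M T} ∈ {t : ℕ | t ≤ T ∧ M t = M T} :=
    Nat.sInf_mem hne2
  have hnS1 : sInf {t : ℕ | t ≤ T ∧ M t = M T}
      ∈ {t : ℕ | 1 ≤ t ∧ t ≤ T ∧ ∀ s : ℕ, 1 ≤ s → s ≤ T → P t ≤ P s} :=
    ⟨hinf, hn.1, (part3 T hT _ hinf hn.1).mpr hn.2⟩
  have hsub : {t : ℕ | 1 ≤ t ∧ t ≤ T ∧ ∀ s : ℕ, 1 ≤ s → s ≤ T → P t ≤ P s}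
      ⊆ {t : ℕ | t ≤ T ∧ M t = M T} :=
    fun t ht => ⟨ht.2.1, (part3 T hT t ht.1 ht.2.1).mp ht.2.2⟩
  exact le_antisymm (Nat.sInf_le hnS1)
    (Nat.sInf_le (hsub (Nat.sInf_mem ⟨_, hnS1⟩)))
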